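/- Let H₂* be the hypergraph on vertex set ℕ whose edges are all finite nonempty subsets of ℕ. Then H₂* has no strongly minimal edge-cover: for every edge-cover C there is an edge-cover C' with |C \ C'| > |C' \ C|. -/
import Mathlib


/-- An edge-cover of the hypergraph `H₂*` on `ℕ` whose edges are all finite nonempty
subsets of `ℕ`: a family of finite nonempty sets whose union is all of `ℕ`. -/
def IsEdgeCoverH2 (C : Set (Finset ℕ)) : Prop :=
  (∀ E ∈ C, E.Nonempty) ∧ ∀ n : ℕ, ∃ E ∈ C, n ∈ E

/-- `H₂*` has no strongly minimal edge-cover. -/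
theorem stmt_4 (C : Set (Finset ℕ)) (hC : IsEdgeCoverH2 C) :
    ∃ C' : Set (Finset ℕ), IsEdgeCoverH2 C' ∧ (C \ C').Finite ∧ (C' \ C).Finite ∧
      (C' \ C).ncard < (C \ C').ncard := by
  obtain ⟨hne, hcov⟩ := hC
  -- C must be infinite: finitely many finite sets cannot cover ℕ.
  have hinf : C.Infinite := by
    intro hfin
    have hU : (Set.univ : Set ℕ) ⊆ ⋃ E ∈ C, (E : Set ℕ) := by
      intro n _
      obtain ⟨E, hE, hnE⟩ := hcov n
      exact Set.mem_biUnion hE hnE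
    have : (Set.univ : Set ℕ).Finite :=
      Set.Finite.subset (Set.Finite.biUnion hfin fun E _ => E.finite_toSet) hU
    exact Set.infinite_univ this
  by_cases hch : ∃ E ∈ C, ∃ F ∈ C, E ≠ F ∧ E ⊆ F
  · -- Remove a strictly smaller edge.
    obtain ⟨E, hE, F, hF, hEF, hsub⟩ := hch
    refine ⟨C \ {E}, ⟨fun G hG => hne G hG.1, fun n => ?_⟩, ?_, ?_, ?_⟩
    · obtain ⟨G, hG, hnG⟩ := hcov n
      by_cases hGE : G = E
      · exact ⟨F, ⟨hF, fun h => hEF (h.symm)⟩, hsub (hGE ▸ hnG)⟩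
      · exact ⟨G, ⟨hG, hGE⟩, hnG⟩
    · have : C \ (C \ {E}) = {E} := by
        ext G
        simp only [Set.mem_diff, Set.mem_singleton_iff, not_and, not_not]
        constructor
        · rintro ⟨hG, h⟩; exact h hG
        · rintro rfl; exact ⟨hE, fun _ => rfl⟩
      rw [this]; exact Set.finite_singleton E
    · have : (C \ {E}) \ C = ∅ := by
        ext G; simp only [Set.mem_diff, Set.mem_empty_iff_false, iff_false, not_and, not_not]
        tauto
      rw [this]; exact Set.finite_empty
    · have h1 : C \ (C \ {E}) = {E} := by
        ext G
        simp only [Set.mem_diff, Set.mem_singleton_iff, not_and, not_not]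
        constructor
        · rintro ⟨hG, h⟩; exact h hG
        · rintro rfl; exact ⟨hE, fun _ => rfl⟩
      have h2 : (C \ {E}) \ C = ∅ := by
        ext G; simp only [Set.mem_diff, Set.mem_empty_iff_false, iff_false, not_and, not_not]
        tauto
      rw [h1, h2]
      simp [Set.ncard_singleton]
  · -- C is an antichain: merge two edges into their union.
    push_neg at hch
    obtain ⟨E, hE, F, hF, hEF⟩ := hinf.nontrivial
    set D : Finset ℕ := E ∪ F with hD
    have hDE : D ≠ E := fun h => hch F hF E hE (Ne.symm hEF) (h ▸ Finset.subset_union_right)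
    have hDF : D ≠ F := fun h => hch E hE F hF hEF (h ▸ Finset.subset_union_left)
    have hDC : D ∉ C := by
      intro hDmem
      exact hch E hE D hDmem (Ne.symm hDE) Finset.subset_union_left
    refine ⟨(C \ {E, F}) ∪ {D}, ⟨?_, ?_⟩, ?_, ?_, ?_⟩
    · rintro G (⟨hG, -⟩ | hG)
      · exact hne G hG
      · rw [Set.mem_singleton_iff] at hG
        subst hG
        exact Finset.Nonempty.mono Finset.subset_union_left (hne E hE)
    · intro n
      obtain ⟨G, hG, hnG⟩ := hcov n
      by_cases h : G = E ∨ G = F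
      · refine ⟨D, Or.inr rfl, ?_⟩
        rcases h with rfl | rfl
        · exact Finset.mem_union_left _ hnG
        · exact Finset.mem_union_right _ hnG
      · push_neg at h
        exact ⟨G, Or.inl ⟨hG, by simp [h.1, h.2]⟩, hnG⟩
    · have : C \ ((C \ {E, F}) ∪ {D}) = {E, F} := by
        ext G
        simp only [Set.mem_diff, Set.mem_union, Set.mem_insert_iff, Set.mem_singleton_iff,
          not_or, not_and, not_not]
        constructor
        · tauto
        · rintro (rfl | rfl)
          · refine ⟨hE, ?_, fun h => hDC (h ▸ hE)⟩; tauto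
          · refine ⟨hF, ?_, fun h => hDC (h ▸ hF)⟩; tauto
      rw [this]; exact (Set.finite_singleton F).insert E
    · have : ((C \ {E, F}) ∪ {D}) \ C = {D} := by
        ext G
        simp only [Set.mem_diff, Set.mem_union, Set.mem_singleton_iff]
        constructor
        · rintro ⟨h | rfl, hGC⟩
          · exact absurd h.1 hGC
          · rfl
        · rintro rfl; exact ⟨Or.inr rfl, hDC⟩
      rw [this]; exact Set.finite_singleton D
    · have h1 : C \ ((C \ {E, F}) ∪ {D}) = {E, F} := by
        ext G
        simp only [Set.mem_diff, Set.mem_union, Set.mem_insert_iff, Set.mem_singleton_iff,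
          not_or, not_and, not_not]
        constructor
        · tauto
        · rintro (rfl | rfl)
          · refine ⟨hE, ?_, fun h => hDC (h ▸ hE)⟩; tauto
          · refine ⟨hF, ?_, fun h => hDC (h ▸ hF)⟩; tauto
      have h2 : ((C \ {E, F}) ∪ {D}) \ C = {D} := by
        ext G
        simp only [Set.mem_diff, Set.mem_union, Set.mem_singleton_iff]
        constructor
        · rintro ⟨h | rfl, hGC⟩
          · exact absurd h.1 hGC
          · rfl
        · rintro rfl; exact ⟨Or.inr rfl, hDC⟩
      rw [h1, h2, Set.ncard_singleton, Set.ncard_pair hEF]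
      omega
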